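/- Let u, w be smooth, divergence-free, mean-free periodic vector fields on the two-dimensional torus 𝕋². Then the Jacobi-type identity ∫_{𝕋²} ((u·∇)w)·Δw dx + ∫_{𝕋²} ((w·∇)u)·Δw dx + ∫_{𝕋²} ((w·∇)w)·Δu dx = 0 holds. -/

import Mathlib

open MeasureTheory Filter
open scoped RealInnerProductSpace Topology

noncomputable section

abbrev E2 := EuclideanSpace ℝ (Fin 2)

/-- The fundamental domain (unit square) of the torus `𝕋² = ℝ²/ℤ²`. -/
def cube : Set E2 := {x | ∀ i, x i ∈ Set.Icc (0:ℝ) 1}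

/-- The `i`-th standard basis vector of `ℝ²`. -/
def e2 (i : Fin 2) : E2 := EuclideanSpace.single i 1

/-- `ℤ²`-periodicity of a vector field (periodicity under unit coordinate translations). -/
def PeriodicVF (u : E2 → E2) : Prop := ∀ (x : E2) (i : Fin 2), u (x + e2 i) = u x

/-- `ℤ²`-periodicity of a scalar field. -/
def PeriodicF (p : E2 → ℝ) : Prop := ∀ (x : E2) (i : Fin 2), p (x + e2 i) = p x

/-- Partial derivative of a vector field in the `i`-th coordinate direction. -/
def pdir (u : E2 → E2) (i : Fin 2) (x : E2) : E2 := fderiv ℝ u x (e2 i)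

/-- Divergence of a vector field. -/
def divg (u : E2 → E2) (x : E2) : ℝ := ∑ i, pdir u i x i

def DivFree (u : E2 → E2) : Prop := ∀ x, divg u x = 0

def MeanFree (u : E2 → E2) : Prop := (∫ x in cube, u x) = 0

/-- Componentwise Laplacian. -/
def lap (u : E2 → E2) (x : E2) : E2 := ∑ i, pdir (pdir u i) i x

/-- The `L²` norm on the torus (integral over the fundamental domain). -/
def L2 (u : E2 → E2) : ℝ := Real.sqrt (∫ x in cube, ‖u x‖ ^ 2)

/-- The `L²` norm of the gradient `‖∇u‖_{L²}`. -/
def gradL2 (u : E2 → E2) : ℝ := Real.sqrt (∫ x in cube, ∑ i, ‖pdir u i x‖ ^ 2)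

/-- `‖Δu‖_{L²}`. -/
def lapL2 (u : E2 → E2) : ℝ := L2 (lap u)

/-- The `L^∞` norm (for continuous periodic fields). -/
def Linf (u : E2 → E2) : ℝ := ⨆ x : E2, ‖u x‖

/-- Full Sobolev `H^k` norm on the torus. -/
def Hnorm (k : ℕ) (u : E2 → E2) : ℝ :=
  Real.sqrt (∑ j ∈ Finset.range (k+1), ∫ x in cube, ‖iteratedFDeriv ℝ j u x‖ ^ 2)

/-- The trilinear form `b(u,v,w) = ∫ ((u·∇)v)·w dx`. -/
def triB (u v w : E2 → E2) : ℝ := ∫ x in cube, ⟪fderiv ℝ v x (u x), w x⟫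

/-- The smallest eigenvalue of the Stokes operator on `𝕋²`. -/
def lam1 : ℝ := 4 * Real.pi ^ 2

/-- The Grashof number. -/
def grashof (ν : ℝ) (f : E2 → E2) : ℝ := L2 f / (ν ^ 2 * lam1)

/-- An interpolant operator satisfying `‖φ − I_h φ‖_{L²} ≤ c₁ h ‖∇φ‖_{L²}` on `H¹` fields. -/
def InterpBound (Ih : (E2 → E2) →ₗ[ℝ] (E2 → E2)) (c₁ h : ℝ) : Prop :=
  ∀ φ : E2 → E2, ContDiff ℝ 1 φ → PeriodicVF φ →
    L2 (fun x => φ x - Ih φ x) ≤ c₁ * h * gradL2 φ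

/-- The 2D Navier–Stokes equations at time `t`. -/
def NSEeq (ν : ℝ) (f : E2 → E2) (u : ℝ → E2 → E2) (p : ℝ → E2 → ℝ) (t : ℝ) : Prop :=
  ∀ x, deriv (fun s => u s x) t + fderiv ℝ (u t) x (u t x) + gradient (p t) x
      = ν • lap (u t) x + f x

/-- The data-assimilation Navier–Stokes–Voigt equations at time `t`. -/
def VoigtEq (ν α μ : ℝ) (f : E2 → E2) (Ih : (E2 → E2) →ₗ[ℝ] (E2 → E2))
    (u v : ℝ → E2 → E2) (q : ℝ → E2 → ℝ) (t : ℝ) : Prop :=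
  ∀ x, deriv (fun s => v s x) t - α ^ 2 • lap (fun y => deriv (fun s => v s y) t) x
      + fderiv ℝ (v t) x (v t x) + gradient (q t) x
      = ν • lap (v t) x + f x + μ • (Ih (u t) x - Ih (v t) x)

/-- `u` is a classical solution of 2D NSE (with pressure `p`) on the time set `s`. -/
def IsNSESolOn (ν : ℝ) (f : E2 → E2) (u : ℝ → E2 → E2) (p : ℝ → E2 → ℝ) (s : Set ℝ) : Prop :=
  ContDiff ℝ (⊤:ℕ∞) (Function.uncurry u) ∧
  (∀ t, PeriodicVF (u t) ∧ DivFree (u t) ∧ MeanFree (u t)) ∧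
  (∀ t, PeriodicF (p t)) ∧
  ∀ t ∈ s, NSEeq ν f u p t

/-- `v` is a classical solution of the data-assimilation NSV system (with pressure `q`),
driven by observations of `u` through `Ih`, on the time set `s`. -/
def IsVoigtSolOn (ν α μ : ℝ) (f : E2 → E2) (Ih : (E2 → E2) →ₗ[ℝ] (E2 → E2))
    (u v : ℝ → E2 → E2) (q : ℝ → E2 → ℝ) (s : Set ℝ) : Prop :=
  ContDiff ℝ (⊤:ℕ∞) (Function.uncurry v) ∧
  (∀ t, PeriodicVF (v t) ∧ DivFree (v t) ∧ MeanFree (v t)) ∧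
  (∀ t, PeriodicF (q t)) ∧
  ∀ t ∈ s, VoigtEq ν α μ f Ih u v q t

/- ### Auxiliary lemmas for the Jacobi identity -/

section JacobiAux

/-! #### The cube -/

lemma isClosed_cube : IsClosed cube := by
  have : cube = ⋂ i : Fin 2, (fun x : E2 => x i) ⁻¹' Set.Icc (0:ℝ) 1 := by
    ext x; simp [cube]
  rw [this]
  exact isClosed_iInter fun i => (isClosed_Icc).preimage (EuclideanSpace.proj i).continuous

lemma isCompact_cube : IsCompact cube := by
  apply Metric.isCompact_of_isClosed_isBounded isClosed_cube
  apply (Metric.isBounded_closedBall (x := (0:E2)) (r := 2)).subset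
  intro x hx
  simp only [Metric.mem_closedBall, dist_zero_right]
  have h1 : ‖x‖ ≤ Real.sqrt 2 := by
    rw [EuclideanSpace.norm_eq]
    apply Real.sqrt_le_sqrt
    have : ∀ i, ‖x i‖ ^ 2 ≤ 1 := fun i => by
      have h := hx i
      rw [Real.norm_eq_abs, sq_abs]
      nlinarith [h.1, h.2]
    calc ∑ i, ‖x i‖ ^ 2 ≤ ∑ _i : Fin 2, (1:ℝ) := Finset.sum_le_sum fun i _ => this i
      _ = 2 := by simp
  have h2 : Real.sqrt 2 ≤ 2 := by
    nlinarith [Real.sq_sqrt (by norm_num : (0:ℝ) ≤ 2), Real.sqrt_nonneg 2]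
  linarith

lemma measurableSet_cube : MeasurableSet cube := isClosed_cube.measurableSet

lemma integrableOn_cube {F : E2 → ℝ} (h : Continuous F) : IntegrableOn F cube :=
  h.continuousOn.integrableOn_compact isCompact_cube

/-! #### Coordinates -/

lemma e2_apply (i j : Fin 2) : e2 i j = if j = i then 1 else 0 := by
  simp [e2, EuclideanSpace.single_apply]

lemma sum_e2 (v : E2) : ∑ j, v j • e2 j = v := by
  ext k
  have : (∑ j, v j • e2 j) k = ∑ j, v j * e2 j k := by
    rw [WithLp.ofLp_sum, Finset.sum_apply]; simp [PiLp.smul_apply, smul_eq_mul]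
  rw [this]
  fin_cases k <;> simp [e2_apply, Fin.sum_univ_two]

lemma clm_apply_expand (M : E2 →L[ℝ] E2) (v : E2) : M v = ∑ j, v j • M (e2 j) := by
  conv_lhs => rw [← sum_e2 v]
  rw [map_sum]
  exact Finset.sum_congr rfl fun j _ => by rw [M.map_smul]

lemma clm_apply_expand' (M : E2 →L[ℝ] ℝ) (v : E2) : M v = ∑ j, v j * M (e2 j) := by
  conv_lhs => rw [← sum_e2 v]
  rw [map_sum]
  exact Finset.sum_congr rfl fun j _ => by rw [M.map_smul]; rfl

/-! #### The measure-preserving parametrization of the square -/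

def Ψ : ℝ × ℝ ≃ᵐ E2 :=
  MeasurableEquiv.finTwoArrow.symm.trans (MeasurableEquiv.toLp 2 (Fin 2 → ℝ))

def Ψ' : ℝ × ℝ ≃ᵐ E2 := (MeasurableEquiv.prodComm).trans Ψ

lemma Ψ_mp : MeasurePreserving Ψ volume volume :=
  ((EuclideanSpace.volume_preserving_symm_measurableEquiv_toLp (Fin 2)).symm _).comp
    ((volume_preserving_finTwoArrow ℝ).symm _)

lemma Ψ'_mp : MeasurePreserving Ψ' volume volume := by
  have hs : MeasurePreserving (Prod.swap : ℝ × ℝ → ℝ × ℝ) volume volume := by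
    rw [Measure.volume_eq_prod]; exact Measure.measurePreserving_swap
  exact Ψ_mp.comp hs

lemma Ψ_cont : Continuous Ψ := by
  have : (Ψ : ℝ × ℝ → E2) = fun p => (WithLp.equiv 2 (Fin 2 → ℝ)).symm ![p.1, p.2] := by
    funext p; rfl
  rw [this]
  exact (PiLp.continuous_toLp 2 (fun _ : Fin 2 => ℝ)).comp
    (continuous_pi fun i => by
      fin_cases i
      · exact continuous_fst
      · exact continuous_snd)

lemma Ψ'_cont : Continuous Ψ' := Ψ_cont.comp continuous_swap

lemma Ψ_fst (p : ℝ × ℝ) : Ψ p 0 = p.1 := rfl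
lemma Ψ_snd (p : ℝ × ℝ) : Ψ p 1 = p.2 := rfl
lemma Ψ'_fst (p : ℝ × ℝ) : Ψ' p 0 = p.2 := rfl
lemma Ψ'_snd (p : ℝ × ℝ) : Ψ' p 1 = p.1 := rfl

lemma hline1 (p : ℝ × ℝ) (t : ℝ) : Ψ (p.1, p.2 + t) = Ψ p + t • e2 1 := by
  ext k
  fin_cases k <;>
    simp [Ψ_fst, Ψ_snd, PiLp.add_apply, PiLp.smul_apply, e2_apply, smul_eq_mul]

lemma hline0 (p : ℝ × ℝ) (t : ℝ) : Ψ' (p.1, p.2 + t) = Ψ' p + t • e2 0 := by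
  ext k
  fin_cases k <;>
    simp [Ψ'_fst, Ψ'_snd, PiLp.add_apply, PiLp.smul_apply, e2_apply, smul_eq_mul]

lemma hcube1 : (Ψ : ℝ × ℝ → E2) ⁻¹' cube = Set.Icc (0:ℝ) 1 ×ˢ Set.Icc (0:ℝ) 1 := by
  ext p
  simp [cube, Fin.forall_fin_two, Ψ_fst, Ψ_snd, Set.mem_prod, Prod.le_def, Set.mem_Icc, and_assoc]
  tauto

lemma hcube0 : (Ψ' : ℝ × ℝ → E2) ⁻¹' cube = Set.Icc (0:ℝ) 1 ×ˢ Set.Icc (0:ℝ) 1 := by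
  ext p
  simp [cube, Fin.forall_fin_two, Ψ'_fst, Ψ'_snd, Set.mem_prod, Prod.le_def, Set.mem_Icc, and_assoc]
  tauto

/-! #### The fundamental lemma: the integral of a partial derivative of a periodic
function over the cube vanishes -/

lemma aux_key (Φ : ℝ × ℝ ≃ᵐ E2) (hmp : MeasurePreserving Φ volume volume)
    (hcont : Continuous Φ) (i : Fin 2)
    (hline : ∀ (p : ℝ × ℝ) (t : ℝ), Φ (p.1, p.2 + t) = Φ p + t • e2 i)
    (hcube : Φ ⁻¹' cube = Set.Icc (0:ℝ) 1 ×ˢ Set.Icc (0:ℝ) 1)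
    (f : E2 → ℝ) (hf : ContDiff ℝ 1 f) (hp : ∀ x, f (x + e2 i) = f x) :
    ∫ x in cube, fderiv ℝ f x (e2 i) = 0 := by
  have hdf : Continuous fun x => fderiv ℝ f x (e2 i) :=
    (ContinuousLinearMap.apply ℝ ℝ (e2 i)).continuous.comp (hf.continuous_fderiv one_ne_zero)
  rw [← hmp.setIntegral_preimage_emb Φ.measurableEmbedding, hcube]
  have hint : IntegrableOn (fun p => fderiv ℝ f (Φ p) (e2 i))
      (Set.Icc (0:ℝ) 1 ×ˢ Set.Icc (0:ℝ) 1) volume :=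
    (hdf.comp hcont).continuousOn.integrableOn_compact (isCompact_Icc.prod isCompact_Icc)
  rw [Measure.volume_eq_prod ℝ ℝ] at hint ⊢
  rw [MeasureTheory.setIntegral_prod _ hint]
  have inner0 : ∀ a : ℝ, ∫ b in Set.Icc (0:ℝ) 1, fderiv ℝ f (Φ (a, b)) (e2 i) = 0 := by
    intro a
    have hline' : ∀ t : ℝ, Φ (a, t) = Φ (a, 0) + t • e2 i := by
      intro t; simpa using hline (a, 0) t
    have hg : ∀ t : ℝ, HasDerivAt (fun s => f (Φ (a, s))) (fderiv ℝ f (Φ (a, t)) (e2 i)) t := by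
      intro t
      have h1 : HasDerivAt (fun s : ℝ => Φ (a, 0) + s • e2 i) (e2 i) t := by
        simpa using ((hasDerivAt_id t).smul_const (e2 i)).const_add (Φ (a, 0))
      have h2 : HasFDerivAt f (fderiv ℝ f (Φ (a, t))) (Φ (a, t)) :=
        (hf.differentiable one_ne_zero (Φ (a, t))).hasFDerivAt
      rw [hline' t] at h2
      have h3 : HasDerivAt (fun s : ℝ => f (Φ (a, 0) + s • e2 i))
          (fderiv ℝ f (Φ (a, 0) + t • e2 i) (e2 i)) t := h2.comp_hasDerivAt t h1
      simpa only [← hline'] using h3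
    have hFTC : ∫ t in (0:ℝ)..1, fderiv ℝ f (Φ (a, t)) (e2 i)
        = f (Φ (a, 1)) - f (Φ (a, 0)) := by
      apply intervalIntegral.integral_eq_sub_of_hasDerivAt (fun t _ => hg t)
      exact ((hdf.comp (hcont.comp (continuous_const.prodMk continuous_id))).intervalIntegrable 0 1)
    have hper : f (Φ (a, 1)) = f (Φ (a, 0)) := by
      rw [hline' 1, one_smul, hp]
    rw [MeasureTheory.integral_Icc_eq_integral_Ioc,
      ← intervalIntegral.integral_of_le (zero_le_one), hFTC, hper, sub_self]
  calc ∫ a in Set.Icc (0:ℝ) 1, ∫ b in Set.Icc (0:ℝ) 1, fderiv ℝ f (Φ (a, b)) (e2 i)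
      = ∫ _a in Set.Icc (0:ℝ) 1, (0:ℝ) := by
        apply setIntegral_congr_fun measurableSet_Icc
        intro a _; exact inner0 a
    _ = 0 := by simp

lemma integral_pd_zero (i : Fin 2) (f : E2 → ℝ) (hf : ContDiff ℝ 1 f)
    (hp : ∀ x, f (x + e2 i) = f x) : ∫ x in cube, fderiv ℝ f x (e2 i) = 0 := by
  fin_cases i
  · exact aux_key Ψ' Ψ'_mp Ψ'_cont 0 hline0 hcube0 f hf hp
  · exact aux_key Ψ Ψ_mp Ψ_cont 1 hline1 hcube1 f hf hp

end JacobiAux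

section JacobiCalc

/-! #### Calculus toolkit -/

lemma fderiv_periodic_dir {V : Type*} [NormedAddCommGroup V] [NormedSpace ℝ V]
    {f : E2 → V} (hf : Differentiable ℝ f) {c : E2} (hp : ∀ x, f (x + c) = f x) (x : E2) :
    fderiv ℝ f (x + c) = fderiv ℝ f x := by
  have h1 : HasFDerivAt (fun y : E2 => y + c) (ContinuousLinearMap.id ℝ E2) x := by
    simpa using (hasFDerivAt_id x).add_const c
  have h2 := (hf (x + c)).hasFDerivAt.comp x h1
  have h3 : (f ∘ fun y : E2 => y + c) = f := funext fun y => hp y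
  rw [h3, ContinuousLinearMap.comp_id] at h2
  exact h2.fderiv.symm

lemma htop : ((⊤:ℕ∞) : WithTop ℕ∞) + 1 ≤ ((⊤:ℕ∞) : WithTop ℕ∞) := by
  norm_num

lemma hone : (1 : WithTop ℕ∞) ≤ ((⊤:ℕ∞) : WithTop ℕ∞) := by
  exact_mod_cast le_top

lemma hne : ((⊤:ℕ∞) : WithTop ℕ∞) ≠ 0 := by
  simp

lemma pdir_contDiff {u : E2 → E2} (hu : ContDiff ℝ (⊤:ℕ∞) u) (i : Fin 2) :
    ContDiff ℝ (⊤:ℕ∞) (pdir u i) := by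
  show ContDiff ℝ (⊤:ℕ∞) fun x => fderiv ℝ u x (e2 i)
  exact (hu.fderiv_right (m := (⊤:ℕ∞)) htop).clm_apply contDiff_const

lemma pdir_periodic {u : E2 → E2} (hu : ContDiff ℝ (⊤:ℕ∞) u) (hup : PeriodicVF u) (i : Fin 2) :
    PeriodicVF (pdir u i) := by
  intro x j
  unfold pdir
  rw [fderiv_periodic_dir (hu.differentiable hne) (fun y => hup y j) x]

lemma cnv_contDiff {a b : E2 → E2} (ha : ContDiff ℝ (⊤:ℕ∞) a) (hb : ContDiff ℝ (⊤:ℕ∞) b) :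
    ContDiff ℝ (⊤:ℕ∞) (fun y => fderiv ℝ b y (a y)) :=
  (hb.fderiv_right (m := (⊤:ℕ∞)) htop).clm_apply ha

lemma cnv_periodic {a b : E2 → E2} (hb : ContDiff ℝ (⊤:ℕ∞) b)
    (hap : PeriodicVF a) (hbp : PeriodicVF b) :
    PeriodicVF (fun y => fderiv ℝ b y (a y)) := by
  intro x j
  simp only
  rw [fderiv_periodic_dir (hb.differentiable hne) (fun y => hbp y j) x, hap x j]

lemma snd_symm {b : E2 → E2} (hb : ContDiff ℝ (⊤:ℕ∞) b) (x v y : E2) :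
    fderiv ℝ (fderiv ℝ b) x v y = fderiv ℝ (fderiv ℝ b) x y v :=
  second_derivative_symmetric (fun z => (hb.differentiable hne z).hasFDerivAt)
    (((hb.fderiv_right (m := (⊤:ℕ∞)) htop).differentiable hne x).hasFDerivAt) v y

lemma fderiv_pdir_apply {b : E2 → E2} (hb : ContDiff ℝ (⊤:ℕ∞) b) (i : Fin 2) (x v : E2) :
    fderiv ℝ (pdir b i) x v = fderiv ℝ (fderiv ℝ b) x v (e2 i) := by
  have hc : DifferentiableAt ℝ (fderiv ℝ b) x :=
    (hb.fderiv_right (m := (⊤:ℕ∞)) htop).differentiable hne x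
  have : pdir b i = fun y => (fderiv ℝ b y) (e2 i) := rfl
  rw [this, fderiv_clm_apply hc (differentiableAt_const (e2 i))]
  simp

lemma pdir_cnv {a b : E2 → E2} (ha : ContDiff ℝ (⊤:ℕ∞) a) (hb : ContDiff ℝ (⊤:ℕ∞) b)
    (i : Fin 2) (x : E2) :
    pdir (fun y => fderiv ℝ b y (a y)) i x
      = fderiv ℝ b x (pdir a i x) + fderiv ℝ (pdir b i) x (a x) := by
  have hc : DifferentiableAt ℝ (fderiv ℝ b) x :=
    (hb.fderiv_right (m := (⊤:ℕ∞)) htop).differentiable hne x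
  have hax : DifferentiableAt ℝ a x := ha.differentiable hne x
  show fderiv ℝ (fun y => (fderiv ℝ b y) (a y)) x (e2 i) = _
  rw [fderiv_clm_apply hc hax]
  simp only [ContinuousLinearMap.add_apply, ContinuousLinearMap.coe_comp', Function.comp_apply,
    ContinuousLinearMap.flip_apply]
  congr 1
  rw [fderiv_pdir_apply hb i x (a x)]
  exact snd_symm hb x (e2 i) (a x)

lemma fderiv_proj_apply {b : E2 → E2} (hb : ContDiff ℝ (⊤:ℕ∞) b) (a : Fin 2) (x v : E2) :
    fderiv ℝ (fun y => b y a) x v = fderiv ℝ b x v a := by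
  have hbx : DifferentiableAt ℝ b x := hb.differentiable hne x
  have h := ((EuclideanSpace.proj (𝕜 := ℝ) a).hasFDerivAt.comp x hbx.hasFDerivAt).fderiv
  have h2 : (fun y => b y a) = (EuclideanSpace.proj (𝕜 := ℝ) a) ∘ b := rfl
  rw [h2, h]
  rfl

lemma proj_contDiff {b : E2 → E2} (hb : ContDiff ℝ (⊤:ℕ∞) b) (a : Fin 2) :
    ContDiff ℝ (⊤:ℕ∞) (fun y => b y a) :=
  (EuclideanSpace.proj (𝕜 := ℝ) a).contDiff.comp hb

end JacobiCalc

section JacobiInt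

/-! #### Integral identities -/

lemma divfree_integral {v : E2 → E2} {φ : E2 → ℝ} (hv : ContDiff ℝ (⊤:ℕ∞) v)
    (hφ : ContDiff ℝ (⊤:ℕ∞) φ) (hvp : PeriodicVF v) (hφp : PeriodicF φ) (hvd : DivFree v) :
    ∫ x in cube, fderiv ℝ φ x (v x) = 0 := by
  have hkey : ∀ j : Fin 2, ∫ x in cube, fderiv ℝ (fun y => v y j * φ y) x (e2 j) = 0 := by
    intro j
    apply integral_pd_zero j _ (((proj_contDiff hv j).mul hφ).of_le hone)
    intro x
    simp only
    rw [hvp x j, hφp x j]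
  have hdφ : Differentiable ℝ φ := hφ.differentiable hne
  have hdvj : ∀ j : Fin 2, Differentiable ℝ (fun y => v y j) := fun j =>
    (proj_contDiff hv j).differentiable hne
  have hpt : ∀ x, ∑ j : Fin 2, fderiv ℝ (fun y => v y j * φ y) x (e2 j)
      = fderiv ℝ φ x (v x) := by
    intro x
    have hprod : ∀ j : Fin 2, fderiv ℝ (fun y => v y j * φ y) x (e2 j)
        = v x j * fderiv ℝ φ x (e2 j) + φ x * fderiv ℝ (fun y => v y j) x (e2 j) := by
      intro j
      rw [fderiv_fun_mul (hdvj j x) (hdφ x)]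
      simp [smul_eq_mul]
    rw [Finset.sum_congr rfl fun j _ => hprod j, Finset.sum_add_distrib, ← Finset.mul_sum]
    have hdiv : ∑ j : Fin 2, fderiv ℝ (fun y => v y j) x (e2 j) = 0 := by
      have h := hvd x
      unfold divg pdir at h
      calc ∑ j : Fin 2, fderiv ℝ (fun y => v y j) x (e2 j)
          = ∑ j : Fin 2, fderiv ℝ v x (e2 j) j :=
            Finset.sum_congr rfl fun j _ => fderiv_proj_apply hv j x (e2 j)
        _ = 0 := h
    rw [hdiv, mul_zero, add_zero, clm_apply_expand' (fderiv ℝ φ x) (v x)]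
  have hcont : ∀ j : Fin 2, Continuous fun x => fderiv ℝ (fun y => v y j * φ y) x (e2 j) :=
    fun j => (ContinuousLinearMap.apply ℝ ℝ (e2 j)).continuous.comp
      (((proj_contDiff hv j).mul hφ).continuous_fderiv hne)
  calc ∫ x in cube, fderiv ℝ φ x (v x)
      = ∫ x in cube, ∑ j : Fin 2, fderiv ℝ (fun y => v y j * φ y) x (e2 j) :=
        setIntegral_congr_fun measurableSet_cube fun x _ => (hpt x).symm
    _ = ∑ j : Fin 2, ∫ x in cube, fderiv ℝ (fun y => v y j * φ y) x (e2 j) :=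
        integral_finset_sum _ fun j _ => integrableOn_cube (hcont j)
    _ = 0 := by
        rw [Finset.sum_congr rfl fun j _ => hkey j]
        simp

lemma ibp_vec (i : Fin 2) {F G : E2 → E2} (hF : ContDiff ℝ (⊤:ℕ∞) F)
    (hG : ContDiff ℝ (⊤:ℕ∞) G) (hFp : PeriodicVF F) (hGp : PeriodicVF G) :
    ∫ x in cube, ⟪F x, pdir G i x⟫ = - ∫ x in cube, ⟪pdir F i x, G x⟫ := by
  have h0 : ∫ x in cube, fderiv ℝ (fun y => ⟪F y, G y⟫) x (e2 i) = 0 := by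
    apply integral_pd_zero i _ ((hF.inner ℝ hG).of_le hone)
    intro x
    rw [hFp x i, hGp x i]
  have hpt : ∀ x, fderiv ℝ (fun y => ⟪F y, G y⟫) x (e2 i)
      = ⟪F x, pdir G i x⟫ + ⟪pdir F i x, G x⟫ := fun x =>
    fderiv_inner_apply ℝ (hF.differentiable hne x) (hG.differentiable hne x) (e2 i)
  rw [setIntegral_congr_fun measurableSet_cube (fun x (_ : x ∈ cube) => hpt x)] at h0
  have hc1 : Continuous fun x => (⟪F x, pdir G i x⟫ : ℝ) :=
    (hF.continuous).inner ((pdir_contDiff hG i).continuous)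
  have hc2 : Continuous fun x => (⟪pdir F i x, G x⟫ : ℝ) :=
    ((pdir_contDiff hF i).continuous).inner (hG.continuous)
  rw [integral_add (integrableOn_cube hc1) (integrableOn_cube hc2)] at h0
  linarith

end JacobiInt

section JacobiPointwise

lemma inner3 (M : E2 →L[ℝ] E2) (p q : E2) :
    ⟪M p, q⟫ = ∑ j : Fin 2, ∑ a : Fin 2, p j * (M (e2 j) a * q a) := by
  rw [clm_apply_expand M p, sum_inner]
  refine Finset.sum_congr rfl fun j _ => ?_
  rw [real_inner_smul_left]
  rw [show ⟪M (e2 j), q⟫ = ∑ a : Fin 2, M (e2 j) a * q a by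
    simp [PiLp.inner_apply, RCLike.inner_apply, conj_trivial, mul_comm]]
  rw [Finset.mul_sum]

lemma pointwise_alg {u w : E2 → E2} (hud : DivFree u) (hwd : DivFree w) (x : E2) :
    ∑ i : Fin 2, (⟪fderiv ℝ w x (pdir u i x), pdir w i x⟫
      + ⟪fderiv ℝ u x (pdir w i x), pdir w i x⟫
      + ⟪fderiv ℝ w x (pdir w i x), pdir u i x⟫) = 0 := by
  have hU : fderiv ℝ u x (e2 0) 0 + fderiv ℝ u x (e2 1) 1 = 0 := by
    have h := hud x
    unfold divg pdir at h
    simpa [Fin.sum_univ_two] using h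
  have hW : fderiv ℝ w x (e2 0) 0 + fderiv ℝ w x (e2 1) 1 = 0 := by
    have h := hwd x
    unfold divg pdir at h
    simpa [Fin.sum_univ_two] using h
  simp only [inner3, pdir, Fin.sum_univ_two]
  set U00 := fderiv ℝ u x (e2 0) 0
  set U01 := fderiv ℝ u x (e2 0) 1
  set U10 := fderiv ℝ u x (e2 1) 0
  set U11 := fderiv ℝ u x (e2 1) 1
  set W00 := fderiv ℝ w x (e2 0) 0
  set W01 := fderiv ℝ w x (e2 0) 1
  set W10 := fderiv ℝ w x (e2 1) 0
  set W11 := fderiv ℝ w x (e2 1) 1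
  linear_combination (W01^2 + W01*W10 + W10^2 + 3*W11^2) * hU
    + (2*U01*W01 + U10*W01 + U01*W10 + 2*U10*W10 - 3*U00*W11 + 3*U00*W00) * hW

lemma fderiv_sum_inner (F G : Fin 2 → E2 → E2) (hF : ∀ i, ContDiff ℝ (⊤:ℕ∞) (F i))
    (hG : ∀ i, ContDiff ℝ (⊤:ℕ∞) (G i)) (x v : E2) :
    fderiv ℝ (fun y => ∑ i : Fin 2, ⟪F i y, G i y⟫) x v
      = ∑ i : Fin 2, (⟪F i x, fderiv ℝ (G i) x v⟫ + ⟪fderiv ℝ (F i) x v, G i x⟫) := by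
  rw [fderiv_fun_sum fun i _ =>
    ((hF i).differentiable hne x).inner ℝ ((hG i).differentiable hne x)]
  rw [ContinuousLinearMap.sum_apply]
  exact Finset.sum_congr rfl fun i _ =>
    fderiv_inner_apply ℝ ((hF i).differentiable hne x) ((hG i).differentiable hne x) v

end JacobiPointwise

/-- the Jacobi-type identity
`∫ ((u·∇)w)·Δw + ∫ ((w·∇)u)·Δw + ∫ ((w·∇)w)·Δu = 0` for smooth divergence-free
mean-free periodic fields `u, w`. -/
theorem jacobi_identity (u w : E2 → E2)
    (hu : ContDiff ℝ (⊤:ℕ∞) u) (hw : ContDiff ℝ (⊤:ℕ∞) w)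
    (hup : PeriodicVF u) (hwp : PeriodicVF w)
    (hud : DivFree u) (hwd : DivFree w)
    (hum : MeanFree u) (hwm : MeanFree w) :
    (∫ x in cube, ⟪fderiv ℝ w x (u x), lap w x⟫)
      + (∫ x in cube, ⟪fderiv ℝ u x (w x), lap w x⟫)
      + (∫ x in cube, ⟪fderiv ℝ w x (w x), lap u x⟫) = 0 := by
  classical
  have expand : ∀ (a b c : E2 → E2), ContDiff ℝ (⊤:ℕ∞) a → ContDiff ℝ (⊤:ℕ∞) b →
      ContDiff ℝ (⊤:ℕ∞) c → PeriodicVF a → PeriodicVF b → PeriodicVF c →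
      (∫ x in cube, ⟪fderiv ℝ b x (a x), lap c x⟫)
        = - ∑ i : Fin 2, ∫ x in cube,
            (⟪fderiv ℝ b x (pdir a i x), pdir c i x⟫
              + ⟪fderiv ℝ (pdir b i) x (a x), pdir c i x⟫) := by
    intro a b c ha hb hc hap hbp hcp
    have hcnv : ContDiff ℝ (⊤:ℕ∞) (fun y => fderiv ℝ b y (a y)) := cnv_contDiff ha hb
    have hcnvp : PeriodicVF (fun y => fderiv ℝ b y (a y)) := cnv_periodic hb hap hbp
    have step1 : (∫ x in cube, ⟪fderiv ℝ b x (a x), lap c x⟫)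
        = ∑ i : Fin 2, ∫ x in cube, ⟪fderiv ℝ b x (a x), pdir (pdir c i) i x⟫ := by
      rw [← integral_finset_sum _ (fun i _ => integrableOn_cube
        ((hcnv.continuous).inner ((pdir_contDiff (pdir_contDiff hc i) i).continuous)))]
      apply setIntegral_congr_fun measurableSet_cube
      intro x _
      show ⟪fderiv ℝ b x (a x), lap c x⟫
          = ∑ i : Fin 2, ⟪fderiv ℝ b x (a x), pdir (pdir c i) i x⟫
      simp only [lap]
      exact inner_sum Finset.univ (fun i => pdir (pdir c i) i x) (fderiv ℝ b x (a x))
    rw [step1]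
    have hibp := Finset.sum_congr rfl fun i (_ : i ∈ (Finset.univ : Finset (Fin 2))) =>
      ibp_vec i hcnv (pdir_contDiff hc i) hcnvp (pdir_periodic hc hcp i)
    rw [hibp,
      show ∑ i : Fin 2, -(∫ x in cube, ⟪pdir (fun y => fderiv ℝ b y (a y)) i x, pdir c i x⟫)
          = -∑ i : Fin 2, ∫ x in cube, ⟪pdir (fun y => fderiv ℝ b y (a y)) i x, pdir c i x⟫
        from Finset.sum_neg_distrib _]
    congr 1
    refine Finset.sum_congr rfl fun i _ => ?_
    congr 1
    funext x
    rw [pdir_cnv ha hb i x, inner_add_left]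
  rw [expand u w w hu hw hw hup hwp hwp, expand w u w hw hu hw hwp hup hwp,
    expand w w u hw hw hu hwp hwp hup]
  suffices h : (∑ i : Fin 2, ∫ x in cube,
        (⟪fderiv ℝ w x (pdir u i x), pdir w i x⟫
          + ⟪fderiv ℝ (pdir w i) x (u x), pdir w i x⟫))
      + (∑ i : Fin 2, ∫ x in cube,
        (⟪fderiv ℝ u x (pdir w i x), pdir w i x⟫
          + ⟪fderiv ℝ (pdir u i) x (w x), pdir w i x⟫))
      + (∑ i : Fin 2, ∫ x in cube,
        (⟪fderiv ℝ w x (pdir w i x), pdir u i x⟫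
          + ⟪fderiv ℝ (pdir w i) x (w x), pdir u i x⟫)) = 0 by linarith
  set φ : E2 → ℝ := fun y => (1/2) * ∑ i : Fin 2, ⟪pdir w i y, pdir w i y⟫ with hφdef
  set ψ : E2 → ℝ := fun y => ∑ i : Fin 2, ⟪pdir u i y, pdir w i y⟫ with hψdef
  have hφ : ContDiff ℝ (⊤:ℕ∞) φ :=
    contDiff_const.mul (ContDiff.sum fun i _ => (pdir_contDiff hw i).inner ℝ (pdir_contDiff hw i))
  have hψ : ContDiff ℝ (⊤:ℕ∞) ψ :=
    ContDiff.sum fun i _ => (pdir_contDiff hu i).inner ℝ (pdir_contDiff hw i)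
  have hφp : PeriodicF φ := by
    intro x j
    simp only [hφdef]
    congr 1
    exact Finset.sum_congr rfl fun i _ => by rw [pdir_periodic hw hwp i x j]
  have hψp : PeriodicF ψ := by
    intro x j
    simp only [hψdef]
    exact Finset.sum_congr rfl fun i _ => by
      rw [pdir_periodic hw hwp i x j, pdir_periodic hu hup i x j]
  have hφd : ∀ x, fderiv ℝ φ x (u x)
      = ∑ i : Fin 2, ⟪fderiv ℝ (pdir w i) x (u x), pdir w i x⟫ := by
    intro x
    have hdsum : DifferentiableAt ℝ (fun y => ∑ i : Fin 2, ⟪pdir w i y, pdir w i y⟫) x :=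
      ((ContDiff.sum fun i _ =>
        (pdir_contDiff hw i).inner ℝ (pdir_contDiff hw i)).differentiable hne) x
    have h1 : fderiv ℝ φ x
        = (1/2 : ℝ) • fderiv ℝ (fun y => ∑ i : Fin 2, ⟪pdir w i y, pdir w i y⟫) x :=
      fderiv_const_mul hdsum (1/2)
    rw [h1, ContinuousLinearMap.smul_apply,
      fderiv_sum_inner (fun i => pdir w i) (fun i => pdir w i)
        (fun i => pdir_contDiff hw i) (fun i => pdir_contDiff hw i) x (u x)]
    rw [show ∑ i : Fin 2, (⟪pdir w i x, fderiv ℝ (pdir w i) x (u x)⟫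
          + ⟪fderiv ℝ (pdir w i) x (u x), pdir w i x⟫)
        = ∑ i : Fin 2, 2 * ⟪fderiv ℝ (pdir w i) x (u x), pdir w i x⟫ from
      Finset.sum_congr rfl fun i _ => by
        rw [real_inner_comm (pdir w i x)]; ring]
    rw [smul_eq_mul, Finset.mul_sum]
    exact Finset.sum_congr rfl fun i _ => by ring
  have hψd : ∀ x, fderiv ℝ ψ x (w x)
      = ∑ i : Fin 2, (⟪fderiv ℝ (pdir u i) x (w x), pdir w i x⟫
          + ⟪fderiv ℝ (pdir w i) x (w x), pdir u i x⟫) := by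
    intro x
    rw [hψdef]
    rw [fderiv_sum_inner (fun i => pdir u i) (fun i => pdir w i)
        (fun i => pdir_contDiff hu i) (fun i => pdir_contDiff hw i) x (w x)]
    exact Finset.sum_congr rfl fun i _ => by
      rw [real_inner_comm (pdir u i x)]; ring
  have key : ∀ x : E2,
      ∑ i : Fin 2,
        ((⟪fderiv ℝ w x (pdir u i x), pdir w i x⟫
            + ⟪fderiv ℝ (pdir w i) x (u x), pdir w i x⟫)
          + (⟪fderiv ℝ u x (pdir w i x), pdir w i x⟫
            + ⟪fderiv ℝ (pdir u i) x (w x), pdir w i x⟫)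
          + (⟪fderiv ℝ w x (pdir w i x), pdir u i x⟫
            + ⟪fderiv ℝ (pdir w i) x (w x), pdir u i x⟫))
        = fderiv ℝ φ x (u x) + fderiv ℝ ψ x (w x) := by
    intro x
    have h0 := pointwise_alg hud hwd x
    rw [hφd x, hψd x]
    simp only [Finset.sum_add_distrib] at h0 ⊢
    linarith
  have hC1 : ∀ i : Fin 2, Continuous fun x =>
      (⟪fderiv ℝ w x (pdir u i x), pdir w i x⟫
        + ⟪fderiv ℝ (pdir w i) x (u x), pdir w i x⟫ : ℝ) := fun i =>
    (((cnv_contDiff (pdir_contDiff hu i) hw).continuous).inner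
        (pdir_contDiff hw i).continuous).add
      (((cnv_contDiff hu (pdir_contDiff hw i)).continuous).inner
        (pdir_contDiff hw i).continuous)
  have hC2 : ∀ i : Fin 2, Continuous fun x =>
      (⟪fderiv ℝ u x (pdir w i x), pdir w i x⟫
        + ⟪fderiv ℝ (pdir u i) x (w x), pdir w i x⟫ : ℝ) := fun i =>
    (((cnv_contDiff (pdir_contDiff hw i) hu).continuous).inner
        (pdir_contDiff hw i).continuous).add
      (((cnv_contDiff hw (pdir_contDiff hu i)).continuous).inner
        (pdir_contDiff hw i).continuous)
  have hC3 : ∀ i : Fin 2, Continuous fun x =>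
      (⟪fderiv ℝ w x (pdir w i x), pdir u i x⟫
        + ⟪fderiv ℝ (pdir w i) x (w x), pdir u i x⟫ : ℝ) := fun i =>
    (((cnv_contDiff (pdir_contDiff hw i) hw).continuous).inner
        (pdir_contDiff hu i).continuous).add
      (((cnv_contDiff hw (pdir_contDiff hw i)).continuous).inner
        (pdir_contDiff hu i).continuous)
  have comb : (∑ i : Fin 2, ∫ x in cube,
        (⟪fderiv ℝ w x (pdir u i x), pdir w i x⟫
          + ⟪fderiv ℝ (pdir w i) x (u x), pdir w i x⟫))
      + (∑ i : Fin 2, ∫ x in cube,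
        (⟪fderiv ℝ u x (pdir w i x), pdir w i x⟫
          + ⟪fderiv ℝ (pdir u i) x (w x), pdir w i x⟫))
      + (∑ i : Fin 2, ∫ x in cube,
        (⟪fderiv ℝ w x (pdir w i x), pdir u i x⟫
          + ⟪fderiv ℝ (pdir w i) x (w x), pdir u i x⟫))
      = ∫ x in cube, (fderiv ℝ φ x (u x) + fderiv ℝ ψ x (w x)) := by
    have hsum_i : ∀ i : Fin 2, ∫ x in cube,
        ((⟪fderiv ℝ w x (pdir u i x), pdir w i x⟫
            + ⟪fderiv ℝ (pdir w i) x (u x), pdir w i x⟫)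
          + (⟪fderiv ℝ u x (pdir w i x), pdir w i x⟫
            + ⟪fderiv ℝ (pdir u i) x (w x), pdir w i x⟫)
          + (⟪fderiv ℝ w x (pdir w i x), pdir u i x⟫
            + ⟪fderiv ℝ (pdir w i) x (w x), pdir u i x⟫))
        = (∫ x in cube,
            (⟪fderiv ℝ w x (pdir u i x), pdir w i x⟫
              + ⟪fderiv ℝ (pdir w i) x (u x), pdir w i x⟫))
          + (∫ x in cube,
            (⟪fderiv ℝ u x (pdir w i x), pdir w i x⟫
              + ⟪fderiv ℝ (pdir u i) x (w x), pdir w i x⟫))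
          + (∫ x in cube,
            (⟪fderiv ℝ w x (pdir w i x), pdir u i x⟫
              + ⟪fderiv ℝ (pdir w i) x (w x), pdir u i x⟫)) := by
      intro i
      rw [integral_add (integrableOn_cube ((hC1 i).fun_add (hC2 i)))
          (integrableOn_cube (hC3 i)),
        integral_add (integrableOn_cube (hC1 i)) (integrableOn_cube (hC2 i))]
    rw [← Finset.sum_add_distrib, ← Finset.sum_add_distrib,
      Finset.sum_congr rfl fun i (_ : i ∈ (Finset.univ : Finset (Fin 2))) => (hsum_i i).symm]
    rw [← integral_finset_sum _ fun i _ =>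
      (integrableOn_cube (((hC1 i).fun_add (hC2 i)).fun_add (hC3 i)) : IntegrableOn _ cube volume)]
    apply setIntegral_congr_fun measurableSet_cube
    intro x _
    simpa using key x
  have d1 : ∫ x in cube, fderiv ℝ φ x (u x) = 0 := divfree_integral hu hφ hup hφp hud
  have d2 : ∫ x in cube, fderiv ℝ ψ x (w x) = 0 := divfree_integral hw hψ hwp hψp hwd
  have hcφ : Continuous fun x => fderiv ℝ φ x (u x) :=
    ((hφ.fderiv_right (m := (⊤:ℕ∞)) htop).clm_apply hu).continuous
  have hcψ : Continuous fun x => fderiv ℝ ψ x (w x) :=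
    ((hψ.fderiv_right (m := (⊤:ℕ∞)) htop).clm_apply hw).continuous
  rw [integral_add (integrableOn_cube hcφ) (integrableOn_cube hcψ), d1, d2] at comb
  linarith [comb]
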